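/- Let Ω be a bounded complete Reinhardt domain in ℂⁿ and let φ ∈ L^∞(Ω) be a quasi-homogeneous function of multidegree J ∈ ℤⁿ, written φ = ϕ e^{iJ·θ} with ϕ multi-radial. Then H*_φ H_φ is diagonal with respect to the orthonormal basis {e_α}_{α∈ℕ₀ⁿ}, and ⟨H*_φ H_φ e_α, e_α⟩ = λ''_α if α+J ∉ ℕ₀ⁿ and ⟨H*_φ H_φ e_α, e_α⟩ = λ''_α − |λ'_α|² if α+J ∈ ℕ₀ⁿ, where λ''_α = ∫_Ω |ϕ(z)|² |e_α(z)|² dV(z) and λ'_α = ∫_Ω ϕ(z) |e_α(z)| |e_{α+J}(z)| dV(z). -/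

import Mathlib

open MeasureTheory Complex Filter Topology Metric

noncomputable section

/-- `ℂⁿ`. -/
abbrev Cn (n : ℕ) := Fin n → ℂ

/-- The coordinatewise (torus/polydisc) action `ξ ⋄ z`. -/
def torusSMul {n : ℕ} (ξ z : Cn n) : Cn n := fun i => ξ i * z i

/-- The unit torus `𝕋ⁿ`. -/
def unitTorus (n : ℕ) : Set (Cn n) := {ξ | ∀ i, ‖ξ i‖ = 1}

/-- A set `Ω ⊆ ℂⁿ` is Reinhardt if `ξ ⋄ z ∈ Ω` whenever `z ∈ Ω` and `ξ ∈ 𝕋ⁿ`. -/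
def IsReinhardt {n : ℕ} (Ω : Set (Cn n)) : Prop :=
  ∀ z ∈ Ω, ∀ ξ ∈ unitTorus n, torusSMul ξ z ∈ Ω

/-- A set `Ω ⊆ ℂⁿ` is complete Reinhardt if `λ ⋄ z ∈ Ω` whenever `z ∈ Ω` and `λ ∈ 𝔻ⁿ`. -/
def IsCompleteReinhardt {n : ℕ} (Ω : Set (Cn n)) : Prop :=
  ∀ z ∈ Ω, ∀ l : Cn n, (∀ i, ‖l i‖ < 1) → torusSMul l z ∈ Ω

/-- Lebesgue measure restricted to `Ω`. -/
abbrev restVol {n : ℕ} (Ω : Set (Cn n)) : Measure (Cn n) := volume.restrict Ω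

/-- The subspace of `L²(Ω)` of functions having a holomorphic representative on `Ω`. -/
def holoSub {n : ℕ} (Ω : Set (Cn n)) : Submodule ℂ (Lp ℂ 2 (restVol Ω)) where
  carrier := {f | ∃ g : Cn n → ℂ, DifferentiableOn ℂ g Ω ∧ ∀ᵐ z ∂(restVol Ω), f z = g z}
  add_mem' := by
    rintro f g ⟨gf, hgf, hf⟩ ⟨gg, hgg, hg⟩
    refine ⟨gf + gg, hgf.add hgg, ?_⟩
    filter_upwards [hf, hg, Lp.coeFn_add f g] with z h1 h2 h3
    rw [h3, Pi.add_apply, h1, h2]; rfl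
  zero_mem' := by
    refine ⟨0, differentiableOn_const 0, ?_⟩
    filter_upwards [Lp.coeFn_zero ℂ 2 (restVol _)] with z hz
    simpa using hz
  smul_mem' := by
    rintro c f ⟨gf, hgf, hf⟩
    refine ⟨c • gf, hgf.const_smul c, ?_⟩
    filter_upwards [hf, Lp.coeFn_smul c f] with z h1 h2
    rw [h2, Pi.smul_apply, h1]; rfl

/-- The Bergman space `A²(Ω)`, the closed subspace of `L²(Ω)` of (a.e. equivalence
classes of) square-integrable holomorphic functions on `Ω`. -/
def A2 {n : ℕ} (Ω : Set (Cn n)) : Submodule ℂ (Lp ℂ 2 (restVol Ω)) :=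
  (holoSub Ω).topologicalClosure

instance A2.instCompleteSpace {n : ℕ} (Ω : Set (Cn n)) : CompleteSpace (A2 Ω) :=
  (Submodule.isClosed_topologicalClosure _).completeSpace_coe

/-- The Bergman projection, i.e. the orthogonal projection of `L²(Ω)` onto `A²(Ω)`. -/
def bergmanProj {n : ℕ} (Ω : Set (Cn n)) : Lp ℂ 2 (restVol Ω) →L[ℂ] A2 Ω :=
  (A2 Ω).orthogonalProjectionOnto

/-- `T` is the Toeplitz operator with symbol `φ` on `A²(Ω)`: `T f = P (φ f)`. -/
def IsToeplitz {n : ℕ} (Ω : Set (Cn n)) (φ : Cn n → ℂ) (T : A2 Ω →L[ℂ] A2 Ω) : Prop :=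
  ∀ f : A2 Ω, ∃ hm : MemLp (fun z => φ z * (f : Lp ℂ 2 (restVol Ω)) z) 2 (restVol Ω),
    T f = bergmanProj Ω (hm.toLp _)

/-- `H` is the Hankel operator with symbol `φ`: `H f = (I - P)(φ f)`. -/
def IsHankel {n : ℕ} (Ω : Set (Cn n)) (φ : Cn n → ℂ)
    (H : A2 Ω →L[ℂ] Lp ℂ 2 (restVol Ω)) : Prop :=
  ∀ f : A2 Ω, ∃ hm : MemLp (fun z => φ z * (f : Lp ℂ 2 (restVol Ω)) z) 2 (restVol Ω),
    H f = hm.toLp _ - (bergmanProj Ω (hm.toLp _) : Lp ℂ 2 (restVol Ω))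

/-- `Kf` is the Bergman kernel of `Ω`: for each `z ∈ Ω`, `Kf (·, z)` is a holomorphic
square-integrable function reproducing at `z` the values of all functions in `A²(Ω)`. -/
def IsBergmanKernel {n : ℕ} (Ω : Set (Cn n)) (Kf : Cn n → Cn n → ℂ) : Prop :=
  ∀ z ∈ Ω, DifferentiableOn ℂ (fun w => Kf w z) Ω ∧
    ∃ hm : MemLp (fun w => Kf w z) 2 (restVol Ω),
      ∀ (g : Cn n → ℂ) (hg : MemLp g 2 (restVol Ω)), DifferentiableOn ℂ g Ω →
        g z = (inner ℂ (hm.toLp _) (hg.toLp g) : ℂ)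

/-- The Bergman kernel is positive on the diagonal of `Ω` (automatic for bounded domains). -/
def KernelDiagPos {n : ℕ} (Ω : Set (Cn n)) (Kf : Cn n → Cn n → ℂ) : Prop :=
  ∀ z ∈ Ω, (Kf z z).im = 0 ∧ 0 < (Kf z z).re

/-- `k` is the family of normalized Bergman kernels `k_z = K(·,z)/√K(z,z)`, as elements
of `A²(Ω)`. -/
def IsNormalizedKernel {n : ℕ} (Ω : Set (Cn n)) (Kf : Cn n → Cn n → ℂ)
    (k : Cn n → A2 Ω) : Prop :=
  ∀ z ∈ Ω, ∀ᵐ w ∂(restVol Ω),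
    (k z : Lp ℂ 2 (restVol Ω)) w = Kf w z / (Real.sqrt ((Kf z z).re) : ℂ)

/-- The Berezin transform of a bounded operator `T` on `A²(Ω)`: `T̃(z) = ⟨T k_z, k_z⟩`
(in the mathematicians' convention; `inner` below is conjugate-linear in the first slot). -/
def berezinOp {n : ℕ} {Ω : Set (Cn n)} (k : Cn n → A2 Ω) (T : A2 Ω →L[ℂ] A2 Ω)
    (z : Cn n) : ℂ :=
  inner ℂ ((k z : Lp ℂ 2 (restVol Ω))) ((T (k z) : Lp ℂ 2 (restVol Ω)))

/-- `F(z) → 0` as `z → bΩ` (`z` ranging over `Ω`). -/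
def BoundaryVanish {X E : Type*} [TopologicalSpace X] [TopologicalSpace E] [Zero E]
    (Ω : Set X) (F : X → E) : Prop :=
  ∀ p ∈ frontier Ω, Tendsto F (nhdsWithin p Ω) (nhds 0)

/-- `ξ^J` for a multi-index `J ∈ ℤⁿ`. -/
def tpow {n : ℕ} (ξ : Cn n) (J : Fin n → ℤ) : ℂ := ∏ i, ξ i ^ J i

/-- The average of `g` over the unit torus `𝕋ⁿ` with respect to the normalized Haar
measure `σ` (`σ(𝕋ⁿ) = 1`). -/
def torusAvg (n : ℕ) (g : Cn n → ℂ) : ℂ :=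
  (((2 * Real.pi) ^ n)⁻¹ : ℝ) •
    ∫ θ in (Set.univ.pi fun _ : Fin n => Set.Ioc (0 : ℝ) (2 * Real.pi)),
      g (fun i => Complex.exp ((θ i : ℂ) * Complex.I))

/-- The `J`-th quasi-homogeneous component `f_J(z) = ∫_{𝕋ⁿ} f(ξ ⋄ z) ξ̄^J dσ(ξ)`. -/
def qhComp {n : ℕ} (J : Fin n → ℤ) (f : Cn n → ℂ) (z : Cn n) : ℂ :=
  torusAvg n (fun ξ => f (torusSMul ξ z) * (starRingEnd ℂ) (tpow ξ J))

/-- `φ` is quasi-homogeneous of multidegree `J`: `φ(ξ ⋄ z) = ξ^J φ(z)` for a.e. `z ∈ Ω`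
and every `ξ ∈ 𝕋ⁿ`. -/
def IsQuasiHomogeneous {n : ℕ} (Ω : Set (Cn n)) (J : Fin n → ℤ) (φ : Cn n → ℂ) : Prop :=
  ∀ ξ ∈ unitTorus n, ∀ᵐ z ∂(restVol Ω), φ (torusSMul ξ z) = tpow ξ J * φ z

/-- The shifted multi-index `α + J` (as an element of `ℕ₀ⁿ`). -/
def shiftIdx {n : ℕ} (J : Fin n → ℤ) (α : Fin n → ℕ) : Fin n → ℕ :=
  fun i => ((α i : ℤ) + J i).toNat

lemma unitTorus_ne_zero {n : ℕ} {ξ : Cn n} (hξ : ξ ∈ unitTorus n) (i : Fin n) : ξ i ≠ 0 := by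
  intro h
  have := hξ i
  rw [h] at this; simp at this

lemma unitTorus_inv {n : ℕ} {ξ : Cn n} (hξ : ξ ∈ unitTorus n) :
    (fun i => (ξ i)⁻¹) ∈ unitTorus n := fun i => by
  simp [map_inv₀, hξ i]

lemma mulMP (a : ℂ) (ha : ‖a‖ = 1) :
    MeasurePreserving (fun z => a * z) (volume : Measure ℂ) volume := by
  have ha' : a ∈ Submonoid.unitSphere ℂ := by
    simp [Submonoid.unitSphere, mem_sphere_iff_norm, ha]
  have := (rotation ⟨a, ha'⟩).measurePreserving
  convert this using 2 with z
  · rfl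
  · rfl
  · rfl

lemma torusMP {n : ℕ} (ξ : Cn n) (hξ : ξ ∈ unitTorus n) :
    MeasurePreserving (torusSMul ξ) (volume : Measure (Cn n)) volume :=
  MeasureTheory.volume_preserving_pi (fun i => mulMP (ξ i) (hξ i))

noncomputable def torusEquiv {n : ℕ} (ξ : Cn n) (hξ : ξ ∈ unitTorus n) : Cn n ≃ᵐ Cn n where
  toFun := torusSMul ξ
  invFun := torusSMul (fun i => (ξ i)⁻¹)
  left_inv := by
    intro z; funext i
    simp only [torusSMul]
    show (ξ i)⁻¹ * (ξ i * z i) = z i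
    rw [← mul_assoc, inv_mul_cancel₀ (unitTorus_ne_zero hξ i), one_mul]
  right_inv := by
    intro z; funext i
    simp only [torusSMul]
    show ξ i * ((ξ i)⁻¹ * z i) = z i
    rw [← mul_assoc, mul_inv_cancel₀ (unitTorus_ne_zero hξ i), one_mul]
  measurable_toFun := (torusMP ξ hξ).measurable
  measurable_invFun := (torusMP _ (unitTorus_inv hξ)).measurable

lemma reinhardt_invariant {n : ℕ} {Ω : Set (Cn n)} (hΩopen : IsOpen Ω)
    (hΩcRein : IsCompleteReinhardt Ω) {ξ : Cn n} (hξ : ξ ∈ unitTorus n) :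
    ∀ z ∈ Ω, torusSMul ξ z ∈ Ω := by
  intro z hz
  obtain ⟨ε, hε, hball⟩ := Metric.isOpen_iff.mp hΩopen z hz
  set δ : ℝ := ε / (2 * (‖z‖ + 1)) with hδ
  have hzpos : (0:ℝ) < ‖z‖ + 1 := by positivity
  have hδpos : 0 < δ := by positivity
  have hw : ((1 + δ : ℝ) : ℂ) • z ∈ Ω := by
    apply hball
    have : ((1 + δ : ℝ) : ℂ) • z - z = ((δ : ℝ) : ℂ) • z := by
      push_cast
      rw [add_smul, one_smul]; ring_nf
    rw [Metric.mem_ball, dist_eq_norm, this, norm_smul]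
    have h1 : ‖((δ:ℝ):ℂ)‖ = δ := by
      simp [Complex.norm_real, abs_of_pos hδpos]
    rw [h1, hδ]
    calc ε / (2 * (‖z‖ + 1)) * ‖z‖ ≤ ε / 2 := by
          rw [div_mul_eq_mul_div, div_le_div_iff₀ (by positivity) (by norm_num)]
          nlinarith [norm_nonneg z]
      _ < ε := by linarith
  have := hΩcRein _ hw (fun i => ξ i / ((1 + δ : ℝ) : ℂ)) ?_
  · convert this using 1
    funext i
    simp only [torusSMul, Pi.smul_apply, smul_eq_mul]
    have hne : ((1:ℂ) + (δ:ℂ)) ≠ 0 := by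
      intro h
      have := congrArg Complex.re h
      simp at this
      linarith
    field_simp
    rw [mul_div_assoc, div_self (by push_cast; exact hne), mul_one]
  · intro i
    rw [norm_div, hξ i]
    rw [show ‖((1 + δ : ℝ) : ℂ)‖ = 1 + δ from by rw [Complex.norm_real, Real.norm_eq_abs, abs_of_pos (by linarith)]]
    rw [one_div, inv_lt_one_iff₀]
    right; linarith

lemma torus_preimage {n : ℕ} {Ω : Set (Cn n)} (hΩopen : IsOpen Ω)
    (hΩcRein : IsCompleteReinhardt Ω) {ξ : Cn n} (hξ : ξ ∈ unitTorus n) :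
    (torusSMul ξ) ⁻¹' Ω = Ω := by
  ext z
  constructor
  · intro hz
    have h2 := reinhardt_invariant hΩopen hΩcRein (unitTorus_inv hξ) _ hz
    have : torusSMul (fun i => (ξ i)⁻¹) (torusSMul ξ z) = z := (torusEquiv ξ hξ).left_inv z
    rwa [this] at h2
  · intro hz
    exact reinhardt_invariant hΩopen hΩcRein hξ z hz

lemma torusMP_rest {n : ℕ} {Ω : Set (Cn n)} (hΩopen : IsOpen Ω)
    (hΩcRein : IsCompleteReinhardt Ω) {ξ : Cn n} (hξ : ξ ∈ unitTorus n) :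
    MeasurePreserving (torusSMul ξ) (restVol Ω) (restVol Ω) := by
  have := (torusMP ξ hξ).restrict_preimage (s := Ω) hΩopen.measurableSet
  rwa [torus_preimage hΩopen hΩcRein hξ] at this

lemma torus_integral_comp {n : ℕ} {Ω : Set (Cn n)} (hΩopen : IsOpen Ω)
    (hΩcRein : IsCompleteReinhardt Ω) {ξ : Cn n} (hξ : ξ ∈ unitTorus n)
    (g : Cn n → ℂ) :
    ∫ z, g (torusSMul ξ z) ∂(restVol Ω) = ∫ z, g z ∂(restVol Ω) :=
  (torusMP_rest hΩopen hΩcRein hξ).integral_comp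
    ((torusEquiv ξ hξ).measurableEmbedding) g

lemma tpow_add {n : ℕ} {ξ : Cn n} (hξ : ξ ∈ unitTorus n) (K L : Fin n → ℤ) :
    tpow ξ (K + L) = tpow ξ K * tpow ξ L := by
  rw [tpow, tpow, tpow, ← Finset.prod_mul_distrib]
  exact Finset.prod_congr rfl fun i _ =>
    zpow_add₀ (unitTorus_ne_zero hξ i) (K i) (L i)

lemma conj_tpow {n : ℕ} {ξ : Cn n} (hξ : ξ ∈ unitTorus n) (K : Fin n → ℤ) :
    (starRingEnd ℂ) (tpow ξ K) = tpow ξ (-K) := by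
  rw [tpow, map_prod]
  refine Finset.prod_congr rfl fun i _ => ?_
  have h1 : (starRingEnd ℂ) (ξ i) * ξ i = 1 := by
    rw [mul_comm, Complex.mul_conj, ← Complex.sq_norm, hξ i]; norm_num
  have hinv : (starRingEnd ℂ) (ξ i) = (ξ i)⁻¹ := eq_inv_of_mul_eq_one_left h1
  rw [map_zpow₀, hinv, inv_zpow, ← zpow_neg, Pi.neg_apply]

lemma exists_tpow_neg_one {n : ℕ} (K : Fin n → ℤ) (i0 : Fin n) (h : K i0 ≠ 0) :
    ∃ ξ ∈ unitTorus n, tpow ξ K = -1 := by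
  classical
  refine ⟨fun i => if i = i0 then Complex.exp ((Real.pi / (K i0) : ℝ) * Complex.I) else 1,
    fun i => ?_, ?_⟩
  · show ‖if i = i0 then Complex.exp ((Real.pi / (K i0) : ℝ) * Complex.I) else 1‖ = 1
    by_cases hi : i = i0
    · rw [if_pos hi, Complex.norm_exp]
      simp
    · rw [if_neg hi]
      simp
  · rw [tpow]
    rw [Finset.prod_eq_single i0]
    · show (if i0 = i0 then Complex.exp ((Real.pi / (K i0) : ℝ) * Complex.I) else 1) ^ K i0 = -1
      rw [if_pos rfl]
      rw [← Complex.exp_int_mul]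
      have heq : (K i0 : ℂ) * ((Real.pi / (K i0) : ℝ) * Complex.I) = Real.pi * Complex.I := by
        push_cast
        have hne : (K i0 : ℂ) ≠ 0 := Int.cast_ne_zero.mpr h
        field_simp
      rw [heq, Complex.exp_pi_mul_I]
    · intro i _ hi
      show (if i = i0 then Complex.exp ((Real.pi / (K i0) : ℝ) * Complex.I) else 1) ^ K i = 1
      rw [if_neg hi, one_zpow]
    · intro hh
      exact absurd (Finset.mem_univ i0) hh

lemma scalar_vanish {n : ℕ} {I : ℂ} {K : Fin n → ℤ} (hK : ∃ i, K i ≠ 0)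
    (h : ∀ ξ ∈ unitTorus n, I = tpow ξ K * I) : I = 0 := by
  obtain ⟨i0, hi0⟩ := hK
  obtain ⟨ξ, hξ, hval⟩ := exists_tpow_neg_one K i0 hi0
  have := h ξ hξ
  rw [hval] at this
  linear_combination this / 2

lemma integral_vanish {n : ℕ} {Ω : Set (Cn n)} (hΩopen : IsOpen Ω)
    (hΩcRein : IsCompleteReinhardt Ω) {K : Fin n → ℤ} (hK : ∃ i, K i ≠ 0)
    (F : Cn n → ℂ)
    (hF : ∀ ξ ∈ unitTorus n, ∀ᵐ z ∂(restVol Ω), F (torusSMul ξ z) = tpow ξ K * F z) :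
    ∫ z, F z ∂(restVol Ω) = 0 := by
  refine scalar_vanish hK (fun ξ hξ => ?_)
  calc ∫ z, F z ∂(restVol Ω) = ∫ z, F (torusSMul ξ z) ∂(restVol Ω) :=
        (torus_integral_comp hΩopen hΩcRein hξ F).symm
    _ = ∫ z, tpow ξ K * F z ∂(restVol Ω) := integral_congr_ae (hF ξ hξ)
    _ = tpow ξ K * ∫ z, F z ∂(restVol Ω) := integral_const_mul _ _

lemma prod_pow_torus {n : ℕ} (ξ z : Cn n) (α : Fin n → ℕ) :
    ∏ i, (torusSMul ξ z) i ^ α i = (∏ i, ξ i ^ α i) * ∏ i, z i ^ α i := by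
  rw [← Finset.prod_mul_distrib]
  exact Finset.prod_congr rfl fun i _ => mul_pow _ _ _

lemma tpow_natCast {n : ℕ} (ξ : Cn n) (α : Fin n → ℕ) :
    tpow ξ (fun i => (α i : ℤ)) = ∏ i, ξ i ^ α i :=
  Finset.prod_congr rfl fun i _ => zpow_natCast _ _

lemma coeff_vanish {n : ℕ} {Ω : Set (Cn n)} (hΩopen : IsOpen Ω)
    (hΩcRein : IsCompleteReinhardt Ω) (J : Fin n → ℤ) (φ : Cn n → ℂ)
    (hφqh : IsQuasiHomogeneous Ω J φ) (cβ cα : ℂ) (β α : Fin n → ℕ)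
    (hne : ∃ i, (α i : ℤ) + J i ≠ (β i : ℤ)) :
    ∫ z, (starRingEnd ℂ) (cβ * ∏ i, z i ^ β i) * (φ z * (cα * ∏ i, z i ^ α i))
      ∂(restVol Ω) = 0 := by
  apply integral_vanish hΩopen hΩcRein
    (K := fun i => (α i : ℤ) + J i - (β i : ℤ))
    (hK := by obtain ⟨i, hi⟩ := hne; exact ⟨i, sub_ne_zero_of_ne hi⟩)
  intro ξ hξ
  filter_upwards [hφqh ξ hξ] with z hz
  simp only [prod_pow_torus, hz]
  rw [← tpow_natCast ξ α, ← tpow_natCast ξ β]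
  have hKfun : (fun i => (α i : ℤ) + J i - (β i : ℤ))
      = (fun i => ((fun i => (α i : ℤ)) i + J i) + (-(fun i => (β i : ℤ))) i) := by
    funext i; simp; ring
  rw [hKfun]
  rw [show (fun i => ((fun i => (α i : ℤ)) i + J i) + (-(fun i => (β i : ℤ))) i)
      = ((fun i => (α i : ℤ)) + J) + (-(fun i => (β i : ℤ))) from rfl]
  rw [tpow_add hξ, tpow_add hξ, ← conj_tpow hξ]
  simp only [map_mul]
  ring

lemma offdiag_vanish {n : ℕ} {Ω : Set (Cn n)} (hΩopen : IsOpen Ω)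
    (hΩcRein : IsCompleteReinhardt Ω) (J : Fin n → ℤ) (φ : Cn n → ℂ)
    (hφqh : IsQuasiHomogeneous Ω J φ) (cβ cα : ℂ) (β α : Fin n → ℕ)
    (hne : ∃ i, (α i : ℤ) ≠ (β i : ℤ)) :
    ∫ z, (starRingEnd ℂ) (φ z * (cβ * ∏ i, z i ^ β i)) * (φ z * (cα * ∏ i, z i ^ α i))
      ∂(restVol Ω) = 0 := by
  apply integral_vanish hΩopen hΩcRein
    (K := fun i => (α i : ℤ) - (β i : ℤ))
    (hK := by obtain ⟨i, hi⟩ := hne; exact ⟨i, sub_ne_zero_of_ne hi⟩)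
  intro ξ hξ
  filter_upwards [hφqh ξ hξ] with z hz
  simp only [prod_pow_torus, hz]
  rw [← tpow_natCast ξ α, ← tpow_natCast ξ β]
  have hKfun : (fun i => (α i : ℤ) - (β i : ℤ))
      = ((-J) + (-(fun i => (β i : ℤ)))) + (J + (fun i => (α i : ℤ))) := by
    funext i; simp; ring
  rw [hKfun, tpow_add hξ, tpow_add hξ, tpow_add hξ, ← conj_tpow hξ, ← conj_tpow hξ]
  simp only [map_mul]
  ring

lemma coord_phase (z : ℂ) (a b : ℕ) (j : ℤ) (h : (a : ℤ) + j = (b : ℤ)) :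
    (starRingEnd ℂ) (z ^ b) * (Complex.exp ((j : ℂ) * (Complex.arg z : ℂ) * Complex.I) * z ^ a)
      = ((‖z‖ : ℝ) : ℂ) ^ b * ((‖z‖ : ℝ) : ℂ) ^ a := by
  by_cases hz : z = 0
  · subst hz
    by_cases ha : a = 0
    · by_cases hj : j = 0
      · have hb : b = 0 := by omega
        simp [ha, hb]
      · have hb' : b ≠ 0 := by omega
        simp [ha, zero_pow hb']
    · simp [zero_pow ha]
  · have key : (‖z‖ : ℂ) * Complex.exp ((Complex.arg z : ℂ) * Complex.I) = z :=
      Complex.norm_mul_exp_arg_mul_I z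
    set r : ℂ := ((‖z‖ : ℝ) : ℂ) with hr
    set w : ℂ := Complex.exp ((Complex.arg z : ℂ) * Complex.I) with hw
    have hconjw : (starRingEnd ℂ) w = Complex.exp (-((Complex.arg z : ℂ) * Complex.I)) := by
      rw [hw, ← Complex.exp_conj]
      congr 1
      simp [Complex.conj_I, Complex.conj_ofReal]
    have hzb : z ^ b = r ^ b * w ^ b := by rw [← key, mul_pow]
    have hza : z ^ a = r ^ a * w ^ a := by rw [← key, mul_pow]
    rw [hzb, hza, map_mul, map_pow, map_pow, hr, Complex.conj_ofReal, hconjw,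
      ← Complex.exp_nat_mul]
    have hwb : w ^ a = Complex.exp ((a : ℂ) * ((Complex.arg z : ℂ) * Complex.I)) := by
      rw [hw, ← Complex.exp_nat_mul]
    rw [hwb]
    have hcollect : Complex.exp ((b : ℂ) * -((Complex.arg z : ℂ) * Complex.I)) *
        (Complex.exp ((j : ℂ) * (Complex.arg z : ℂ) * Complex.I) *
          Complex.exp ((a : ℂ) * ((Complex.arg z : ℂ) * Complex.I))) = 1 := by
      rw [← Complex.exp_add, ← Complex.exp_add]
      have hc : (a : ℂ) + (j : ℂ) = (b : ℂ) := by exact_mod_cast h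
      have h0 : (b : ℂ) * -((Complex.arg z : ℂ) * Complex.I) +
          ((j : ℂ) * (Complex.arg z : ℂ) * Complex.I +
            (a : ℂ) * ((Complex.arg z : ℂ) * Complex.I)) = 0 := by
        linear_combination ((Complex.arg z : ℂ) * Complex.I) * hc
      rw [h0, Complex.exp_zero]
    linear_combination (r ^ b * r ^ a) * hcollect

lemma lam_integrand {n : ℕ} (J : Fin n → ℤ) (w : ℂ) (cα cγ : ℝ) (α γ : Fin n → ℕ)
    (hγ : ∀ i, (α i : ℤ) + J i = (γ i : ℤ)) (z : Cn n) :
    (starRingEnd ℂ) ((cγ : ℂ) * ∏ i, z i ^ γ i) *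
      ((w * ∏ i, Complex.exp ((J i : ℂ) * (Complex.arg (z i) : ℂ) * Complex.I)) *
        ((cα : ℂ) * ∏ i, z i ^ α i))
      = w * Complex.ofReal ((cα * ∏ i, ‖z i‖ ^ α i) *
          (cγ * ∏ i, ‖z i‖ ^ γ i)) := by
  have hprod : (∏ i, (starRingEnd ℂ) (z i ^ γ i)) *
      ((∏ i, Complex.exp ((J i : ℂ) * (Complex.arg (z i) : ℂ) * Complex.I)) *
        (∏ i, z i ^ α i))
      = (∏ i, ((‖z i‖ : ℝ) : ℂ) ^ γ i) * ∏ i, ((‖z i‖ : ℝ) : ℂ) ^ α i := by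
    rw [← Finset.prod_mul_distrib, ← Finset.prod_mul_distrib, ← Finset.prod_mul_distrib]
    exact Finset.prod_congr rfl fun i _ => coord_phase (z i) (α i) (γ i) (J i) (hγ i)
  rw [map_mul, map_prod, Complex.conj_ofReal]
  push_cast
  linear_combination ((cγ : ℂ) * (cα : ℂ) * w) * hprod

lemma diag_integrand {n : ℕ} (J : Fin n → ℤ) (w : ℂ) (cα : ℝ) (hcα : 0 ≤ cα)
    (α : Fin n → ℕ) (z : Cn n) :
    (starRingEnd ℂ) ((w * ∏ i, Complex.exp ((J i : ℂ) * (Complex.arg (z i) : ℂ) * Complex.I)) *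
        ((cα : ℂ) * ∏ i, z i ^ α i)) *
      ((w * ∏ i, Complex.exp ((J i : ℂ) * (Complex.arg (z i) : ℂ) * Complex.I)) *
        ((cα : ℂ) * ∏ i, z i ^ α i))
    = Complex.ofReal (‖w‖ ^ 2 * (cα * ∏ i, ‖z i‖ ^ α i) ^ 2) := by
  have h1 : ∀ v : ℂ, (starRingEnd ℂ) v * v = Complex.ofReal (‖v‖ ^ 2) := fun v => by
    rw [mul_comm, Complex.mul_conj, Complex.normSq_eq_norm_sq]
  rw [h1]
  congr 1
  have habs : ‖(w * ∏ i, Complex.exp ((J i : ℂ) * (Complex.arg (z i) : ℂ) * Complex.I)) *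
      ((cα : ℂ) * ∏ i, z i ^ α i)‖ = ‖w‖ * (cα * ∏ i, ‖z i‖ ^ α i) := by
    rw [norm_mul, norm_mul, norm_mul, norm_prod, norm_prod]
    have he1 : ∀ i ∈ Finset.univ, ‖Complex.exp ((J i : ℂ) * (Complex.arg (z i) : ℂ) * Complex.I)‖ = 1 :=
      fun i _ => by rw [Complex.norm_exp]; simp
    rw [Finset.prod_congr rfl he1, Finset.prod_const_one, mul_one]
    have he2 : ∀ i ∈ Finset.univ, ‖z i ^ α i‖ = ‖z i‖ ^ α i :=
      fun i _ => norm_pow _ _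
    rw [Finset.prod_congr rfl he2]
    rw [Complex.norm_real, Real.norm_eq_abs, _root_.abs_of_nonneg hcα]
  rw [habs]
  ring

lemma orth_zero_of_inner_eq_zero {E : Type*} [NormedAddCommGroup E] [InnerProductSpace ℂ E]
    [CompleteSpace E] {ι : Type*} {e : ι → E}
    (hdense : (Submodule.span ℂ (Set.range e)).topologicalClosure = ⊤)
    (x : E) (hx : ∀ i, (inner ℂ (e i) x : ℂ) = 0) : x = 0 := by
  have hx' : x ∈ (Submodule.span ℂ (Set.range e))ᗮ := by
    rw [Submodule.mem_orthogonal]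
    intro v hv
    induction hv using Submodule.span_induction with
    | mem y hy => obtain ⟨i, rfl⟩ := hy; exact hx i
    | zero => exact inner_zero_left x
    | add a b _ _ ha hb => rw [inner_add_left, ha, hb, add_zero]
    | smul r a _ ha => rw [inner_smul_left, ha, mul_zero]
  rw [Submodule.topologicalClosure_eq_top_iff] at hdense
  rw [hdense] at hx'
  simpa using hx'

lemma inner_coe_orthogonalProjection {E : Type*} [NormedAddCommGroup E] [InnerProductSpace ℂ E]
    (K : Submodule ℂ E) [CompleteSpace K] (v : E) (w : E) (hw : w ∈ K) :
    (inner ℂ w ((K.orthogonalProjectionOnto v : K) : E) : ℂ) = inner ℂ w v := by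
  have h0 := K.starProjection_inner_eq_zero v w hw
  rw [Submodule.starProjection_apply] at h0
  have h1 : (inner ℂ w (v - ((K.orthogonalProjectionOnto v : K) : E)) : ℂ) = 0 := by
    rw [← inner_conj_symm, h0, map_zero]
  rw [inner_sub_right] at h1
  exact ((sub_eq_zero.mp h1)).symm

lemma inner_sub_proj {E : Type*} [NormedAddCommGroup E] [InnerProductSpace ℂ E]
    (K : Submodule ℂ E) [CompleteSpace K] (a a' : E) :
    (inner ℂ (a - ((K.orthogonalProjectionOnto a : K) : E)) (a' - ((K.orthogonalProjectionOnto a' : K) : E)) : ℂ)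
      = inner ℂ a a' - inner ℂ ((K.orthogonalProjectionOnto a : K) : E) ((K.orthogonalProjectionOnto a' : K) : E) := by
  set b : E := ((K.orthogonalProjectionOnto a : K) : E)
  set b' : E := ((K.orthogonalProjectionOnto a' : K) : E)
  have h1 : (inner ℂ (a - b) b' : ℂ) = 0 := by
    have h0 := K.starProjection_inner_eq_zero a b' (SetLike.coe_mem _)
    rwa [Submodule.starProjection_apply] at h0
  have h2 : (inner ℂ b a' : ℂ) = inner ℂ b b' := (inner_coe_orthogonalProjection K a' b (SetLike.coe_mem _)).symm
  rw [inner_sub_right, h1, sub_zero, inner_sub_left, h2]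



set_option maxHeartbeats 3000000 in
/-- Let `Ω ⊆ ℂⁿ` be a bounded complete Reinhardt domain and
`φ = ϕ e^{iJ·θ} ∈ L^∞(Ω)` quasi-homogeneous of multidegree `J` with `ϕ` multi-radial.
Then `H*_φ H_φ` is diagonal w.r.t. `{e_α}`, with diagonal entries `λ''_α` when
`α + J ∉ ℕ₀ⁿ` and `λ''_α - |λ'_α|²` when `α + J ∈ ℕ₀ⁿ`, where
`λ''_α = ∫_Ω |ϕ|² |e_α|² dV` and `λ'_α = ∫_Ω ϕ |e_α| |e_{α+J}| dV`. -/
theorem hankel_square_quasiHomogeneous_diagonal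
    {n : ℕ} (Ω : Set (Cn n)) (hΩopen : IsOpen Ω) (hΩconn : IsConnected Ω)
    (hΩbd : Bornology.IsBounded Ω) (hΩcRein : IsCompleteReinhardt Ω)
    (J : Fin n → ℤ) (φ ϕ : Cn n → ℂ) (hφ : MemLp φ ⊤ (restVol Ω))
    (hφqh : IsQuasiHomogeneous Ω J φ)
    (hmr : ∀ z w : Cn n, (∀ i, ‖z i‖ = ‖w i‖) → ϕ z = ϕ w)
    (hdecomp : ∀ᵐ z ∂(restVol Ω),
      φ z = ϕ z * ∏ i, Complex.exp ((J i : ℂ) * (Complex.arg (z i) : ℂ) * Complex.I))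
    -- the normalized monomials `e_α = z^α/‖z^α‖`, an orthonormal basis of `A²(Ω)`
    (e : (Fin n → ℕ) → A2 Ω) (c : (Fin n → ℕ) → ℝ)
    (he : ∀ α, 0 < c α ∧ ‖(e α : Lp ℂ 2 (restVol Ω))‖ = 1 ∧
      ∀ᵐ z ∂(restVol Ω), (e α : Lp ℂ 2 (restVol Ω)) z = (c α : ℂ) * ∏ i, z i ^ α i)
    (hON : Orthonormal ℂ e)
    (hdense : (Submodule.span ℂ (Set.range e)).topologicalClosure = ⊤)
    (H : A2 Ω →L[ℂ] Lp ℂ 2 (restVol Ω)) (hH : IsHankel Ω φ H) :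
    (∀ α β : Fin n → ℕ, α ≠ β →
      (inner ℂ ((e β : Lp ℂ 2 (restVol Ω)))
        (((ContinuousLinearMap.adjoint H) (H (e α)) : Lp ℂ 2 (restVol Ω))) : ℂ) = 0)
    ∧ (∀ α : Fin n → ℕ, ¬ (∀ i, 0 ≤ (α i : ℤ) + J i) →
        (inner ℂ ((e α : Lp ℂ 2 (restVol Ω)))
          (((ContinuousLinearMap.adjoint H) (H (e α)) : Lp ℂ 2 (restVol Ω))) : ℂ)
          = Complex.ofReal (∫ z in Ω,
              ‖ϕ z‖ ^ 2 * (c α * ∏ i, ‖z i‖ ^ α i) ^ 2))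
    ∧ (∀ α : Fin n → ℕ, (∀ i, 0 ≤ (α i : ℤ) + J i) →
        (inner ℂ ((e α : Lp ℂ 2 (restVol Ω)))
          (((ContinuousLinearMap.adjoint H) (H (e α)) : Lp ℂ 2 (restVol Ω))) : ℂ)
          = Complex.ofReal (∫ z in Ω,
              ‖ϕ z‖ ^ 2 * (c α * ∏ i, ‖z i‖ ^ α i) ^ 2)
            - Complex.ofReal (‖∫ z in Ω, ϕ z * Complex.ofReal
                ((c α * ∏ i, ‖z i‖ ^ α i) *
                 (c (shiftIdx J α) * ∏ i, ‖z i‖ ^ shiftIdx J α i))‖ ^ 2)) := by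
  classical
  choose hmem hform using hH
  set u : A2 Ω → Lp ℂ 2 (restVol Ω) := fun f => (hmem f).toLp _ with hu_def
  have hu : ∀ f : A2 Ω, ∀ᵐ z ∂(restVol Ω),
      (u f) z = φ z * (f : Lp ℂ 2 (restVol Ω)) z := fun f => (hmem f).coeFn_toLp
  have hg : ∀ α : Fin n → ℕ, ∀ᵐ z ∂(restVol Ω),
      (e α : Lp ℂ 2 (restVol Ω)) z = (c α : ℂ) * ∏ i, z i ^ α i := fun α => (he α).2.2
  have hcoeff : ∀ α β : Fin n → ℕ, (∃ i, (α i : ℤ) + J i ≠ (β i : ℤ)) →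
      (inner ℂ ((e β : Lp ℂ 2 (restVol Ω))) (u (e α)) : ℂ) = 0 := by
    intro α β hne
    rw [MeasureTheory.L2.inner_def]
    simp_rw [RCLike.inner_apply']
    refine Eq.trans (integral_congr_ae ?_)
      (coeff_vanish hΩopen hΩcRein J φ hφqh (c β : ℂ) (c α : ℂ) β α hne)
    filter_upwards [hg α, hg β, hu (e α)] with z h1 h2 h3
    rw [h3, h2, h1]
  have hoff : ∀ α β : Fin n → ℕ, α ≠ β →
      (inner ℂ (u (e β)) (u (e α)) : ℂ) = 0 := by
    intro α β hne
    rw [MeasureTheory.L2.inner_def]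
    simp_rw [RCLike.inner_apply']
    refine Eq.trans (integral_congr_ae ?_)
      (offdiag_vanish hΩopen hΩcRein J φ hφqh (c β : ℂ) (c α : ℂ) β α ?_)
    · filter_upwards [hg α, hg β, hu (e α), hu (e β)] with z h1 h2 h3 h4
      rw [h3, h4, h2, h1]
    · by_contra hc
      push_neg at hc
      apply hne
      funext i
      exact_mod_cast hc i
  have hdiag : ∀ α : Fin n → ℕ,
      (inner ℂ (u (e α)) (u (e α)) : ℂ)
        = Complex.ofReal (∫ z in Ω,
            ‖ϕ z‖ ^ 2 * (c α * ∏ i, ‖z i‖ ^ α i) ^ 2) := by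
    intro α
    rw [MeasureTheory.L2.inner_def]
    simp_rw [RCLike.inner_apply']
    have step : ∫ z, (starRingEnd ℂ) ((u (e α)) z) * (u (e α)) z ∂(restVol Ω)
        = ∫ z, ((‖ϕ z‖ ^ 2 * (c α * ∏ i, ‖z i‖ ^ α i) ^ 2 : ℝ) : ℂ)
            ∂(restVol Ω) := by
      refine integral_congr_ae ?_
      filter_upwards [hg α, hu (e α), hdecomp] with z h1 h2 h3
      rw [h2, h1, h3]
      exact diag_integrand J (ϕ z) (c α) (le_of_lt (he α).1) α z
    rw [step]
    exact integral_ofReal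
  have hmain : ∀ α β : Fin n → ℕ,
      (inner ℂ ((e β : Lp ℂ 2 (restVol Ω)))
          (((ContinuousLinearMap.adjoint H) (H (e α)) : Lp ℂ 2 (restVol Ω))) : ℂ)
        = inner ℂ (u (e β)) (u (e α))
          - inner ℂ ((bergmanProj Ω (u (e β)) : Lp ℂ 2 (restVol Ω)))
              ((bergmanProj Ω (u (e α)) : Lp ℂ 2 (restVol Ω))) := by
    intro α β
    rw [← Submodule.coe_inner, ContinuousLinearMap.adjoint_inner_right]
    rw [hform (e β), hform (e α)]
    exact inner_sub_proj (A2 Ω) (u (e β)) (u (e α))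
  have hx : ∀ (α β : Fin n → ℕ),
      (inner ℂ (e β) (bergmanProj Ω (u (e α))) : ℂ)
        = inner ℂ ((e β : Lp ℂ 2 (restVol Ω))) (u (e α)) := by
    intro α β
    rw [Submodule.coe_inner]
    exact inner_coe_orthogonalProjection (A2 Ω) (u (e α)) _ (SetLike.coe_mem (e β))
  have hP0 : ∀ α : Fin n → ℕ, ¬ (∀ i, 0 ≤ (α i : ℤ) + J i) →
      bergmanProj Ω (u (e α)) = 0 := by
    intro α hα
    apply orth_zero_of_inner_eq_zero hdense
    intro β
    rw [hx α β]
    apply hcoeff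
    push_neg at hα
    obtain ⟨i, hi⟩ := hα
    exact ⟨i, by omega⟩
  have hγval : ∀ α : Fin n → ℕ, (∀ i, 0 ≤ (α i : ℤ) + J i) →
      ∀ i, ((shiftIdx J α) i : ℤ) = (α i : ℤ) + J i :=
    fun α hα i => Int.toNat_of_nonneg (hα i)
  have hPs : ∀ α : Fin n → ℕ, (∀ i, 0 ≤ (α i : ℤ) + J i) →
      bergmanProj Ω (u (e α))
        = (inner ℂ ((e (shiftIdx J α) : Lp ℂ 2 (restVol Ω))) (u (e α)) : ℂ) • e (shiftIdx J α) := by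
    intro α hα
    have hsub : bergmanProj Ω (u (e α))
        - (inner ℂ ((e (shiftIdx J α) : Lp ℂ 2 (restVol Ω))) (u (e α)) : ℂ) • e (shiftIdx J α)
        = 0 := by
      apply orth_zero_of_inner_eq_zero hdense
      intro β
      rw [inner_sub_right, inner_smul_right (𝕜 := ℂ) (E := A2 Ω), hx α β]
      by_cases hβ : β = shiftIdx J α
      · subst hβ
        rw [orthonormal_iff_ite.mp hON, if_pos rfl, mul_one, sub_self]
      · rw [orthonormal_iff_ite.mp hON, if_neg hβ, mul_zero, sub_zero]
        apply hcoeff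
        obtain ⟨i, hi⟩ := Function.ne_iff.mp hβ
        have hgi := hγval α hα i
        exact ⟨i, by omega⟩
    exact sub_eq_zero.mp hsub
  refine ⟨?_, ?_, ?_⟩
  · intro α β hne
    rw [hmain α β, hoff α β hne]
    by_cases hA : ∀ i, 0 ≤ (α i : ℤ) + J i
    · by_cases hB : ∀ i, 0 ≤ (β i : ℤ) + J i
      · rw [hPs α hA, hPs β hB]
        rw [Submodule.coe_smul, Submodule.coe_smul, inner_smul_left, inner_smul_right]
        have hzero : (inner ℂ ((e (shiftIdx J β) : Lp ℂ 2 (restVol Ω)))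
            ((e (shiftIdx J α) : Lp ℂ 2 (restVol Ω))) : ℂ) = 0 := by
          rw [← Submodule.coe_inner, orthonormal_iff_ite.mp hON, if_neg ?_]
          intro hc
          apply hne
          funext i
          have h1 := congrFun hc i
          have h2 := hγval α hA i
          have h3 := hγval β hB i
          rw [h1] at h3
          omega
        rw [hzero, mul_zero, mul_zero, sub_zero]
      · rw [hP0 β hB]
        simp
    · rw [hP0 α hA]
      simp
  · intro α hα
    rw [hmain α α, hP0 α hα]
    simp only [ZeroMemClass.coe_zero, inner_zero_right, sub_zero]
    exact hdiag α
  · intro α hα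
    rw [hmain α α, hPs α hα]
    rw [Submodule.coe_smul, inner_smul_left, inner_smul_right]
    have h1 : (inner ℂ ((e (shiftIdx J α) : Lp ℂ 2 (restVol Ω)))
        ((e (shiftIdx J α) : Lp ℂ 2 (restVol Ω))) : ℂ) = 1 := by
      rw [← Submodule.coe_inner, orthonormal_iff_ite.mp hON, if_pos rfl]
    rw [h1, mul_one, hdiag α]
    congr 1
    set lam : ℂ := inner ℂ ((e (shiftIdx J α) : Lp ℂ 2 (restVol Ω))) (u (e α)) with hlam_def
    have hlam : lam = ∫ z in Ω, ϕ z * Complex.ofReal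
        ((c α * ∏ i, ‖z i‖ ^ α i) *
         (c (shiftIdx J α) * ∏ i, ‖z i‖ ^ shiftIdx J α i)) := by
      rw [hlam_def, MeasureTheory.L2.inner_def]
      simp_rw [RCLike.inner_apply']
      refine integral_congr_ae ?_
      filter_upwards [hg α, hg (shiftIdx J α), hu (e α), hdecomp] with z h1 h2 h3 h4
      rw [h3, h2, h1, h4]
      exact lam_integrand J (ϕ z) (c α) (c (shiftIdx J α)) α (shiftIdx J α)
        (fun i => (hγval α hα i).symm) z
    have h2 : (starRingEnd ℂ) lam * lam = Complex.ofReal (‖lam‖ ^ 2) := by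
      rw [mul_comm, Complex.mul_conj, Complex.normSq_eq_norm_sq]
    rw [h2, hlam]


end
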